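/- Every simple graph that admits a segment representation admits a segment representation in which every segment endpoint has integer coordinates. -/

import Mathlib

/-- The segment in the plane with the given pair of endpoints. -/
def segOf (e : (ℝ × ℝ) × (ℝ × ℝ)) : Set (ℝ × ℝ) := segment ℝ e.1 e.2

/-- `f` (given by endpoint pairs) is a segment representation of `G`. -/
def IsSegRep {V : Type*} (G : SimpleGraph V) (f : V → (ℝ × ℝ) × (ℝ × ℝ)) : Prop :=
  ∀ u v : V, u ≠ v → ((segOf (f u) ∩ segOf (f v)).Nonempty ↔ G.Adj u v)

/-- `G` is a segment graph. -/
def IsSegGraph {V : Type*} (G : SimpleGraph V) : Prop := ∃ f, IsSegRep G f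

/-- Cast a pair of integer points to a pair of real points. -/
def intPts (g : (ℤ × ℤ) × (ℤ × ℤ)) : (ℝ × ℝ) × (ℝ × ℝ) :=
  (((g.1.1 : ℝ), (g.1.2 : ℝ)), ((g.2.1 : ℝ), (g.2.2 : ℝ)))

noncomputable section
namespace SegAux

set_option linter.unusedSectionVars false

abbrev Pt := ℝ × ℝ

def cross (p q : Pt) : ℝ := p.1 * q.2 - p.2 * q.1

lemma cross_skew (p q : Pt) : cross p q = - cross q p := by simp [cross]; ring

lemma cross_self (p : Pt) : cross p p = 0 := by simp [cross]; ring

lemma cross_add_right (p q r : Pt) : cross p (q + r) = cross p q + cross p r := by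
  simp [cross]; ring

lemma cross_sub_right (p q r : Pt) : cross p (q - r) = cross p q - cross p r := by
  simp [cross]; ring

lemma cross_smul_right (p : Pt) (t : ℝ) (q : Pt) : cross p (t • q) = t * cross p q := by
  simp [cross, Prod.smul_def]; ring

lemma parallel_trans {x y d : Pt} (hd : d ≠ 0) (hx : cross x d = 0) (hy : cross y d = 0) :
    cross x y = 0 := by
  obtain ⟨d1, d2⟩ := d
  simp only [cross] at *
  rcases (by simpa [Prod.ext_iff] using hd : ¬(d1 = 0 ∧ d2 = 0)) with h
  by_cases h1 : d1 = 0
  · have h2 : d2 ≠ 0 := by tauto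
    subst h1
    have ex : x.1 = 0 := by
      rcases mul_eq_zero.1 (by linarith : x.1 * d2 = 0) with h | h
      exacts [h, absurd h h2]
    have ey : y.1 = 0 := by
      rcases mul_eq_zero.1 (by linarith : y.1 * d2 = 0) with h | h
      exacts [h, absurd h h2]
    rw [ex, ey]; ring
  · have e1 : (x.1 * y.2 - x.2 * y.1) * d1 = 0 := by linear_combination y.1 * hx - x.1 * hy
    have := mul_eq_zero.1 e1
    tauto

lemma solve_param {d w : Pt} (hd : d ≠ 0) (h : cross d w = 0) : ∃ t : ℝ, w = t • d := by
  obtain ⟨d1, d2⟩ := d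
  simp only [cross] at h
  by_cases h1 : d1 = 0
  · have h2 : d2 ≠ 0 := by simp [Prod.ext_iff, h1] at hd; tauto
    refine ⟨w.2 / d2, ?_⟩
    have hw1 : w.1 = 0 := by
      rcases mul_eq_zero.1 (by linear_combination -h + w.2 * h1 : w.1 * d2 = 0) with h' | h'
      exacts [h', absurd h' h2]
    have : (w.2 / d2) • ((d1, d2) : Pt) = (w.2 / d2 * d1, w.2 / d2 * d2) := rfl
    rw [this, h1]
    ext
    · simp [hw1]
    · simp; field_simp
  · refine ⟨w.1 / d1, ?_⟩
    have : (w.1 / d1) • ((d1, d2) : Pt) = (w.1 / d1 * d1, w.1 / d1 * d2) := rfl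
    rw [this]
    ext
    · simp; field_simp
    · simp; field_simp; linarith [h]


lemma cross_zero_right (p : Pt) : cross p 0 = 0 := by simp [cross]
lemma cross_neg_right (p q : Pt) : cross p (-q) = - cross p q := by simp [cross]; ring

-- L5
lemma mem_seg_param {o dv : Pt} {t1 t2 s : ℝ} (h1 : min t1 t2 < s) (h2 : s < max t1 t2) :
    o + s • dv ∈ segment ℝ (o + t1 • dv) (o + t2 • dv) := by
  rcases le_total t1 t2 with hle | hle
  · rw [min_eq_left hle] at h1
    rw [max_eq_right hle] at h2
    have hne : t2 - t1 > 0 := by linarith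
    set l := (s - t1) / (t2 - t1) with hl
    have key : (1 - l) * t1 + l * t2 = s := by rw [hl]; field_simp; ring
    refine ⟨1 - l, l, ?_, ?_, by ring, ?_⟩
    · have : l ≤ 1 := by rw [hl, div_le_one hne]; linarith
      linarith
    · rw [hl]; exact le_of_lt (div_pos (by linarith) hne)
    · ext
      · simp only [Prod.smul_def, smul_eq_mul, Prod.fst_add, Prod.mk_add_mk]
        linear_combination dv.1 * key
      · simp only [Prod.smul_def, smul_eq_mul, Prod.snd_add, Prod.mk_add_mk]
        linear_combination dv.2 * key
  · rw [min_eq_right hle] at h1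
    rw [max_eq_left hle] at h2
    rw [segment_symm]
    have hne : t1 - t2 > 0 := by linarith
    set l := (s - t2) / (t1 - t2) with hl
    have key : (1 - l) * t2 + l * t1 = s := by rw [hl]; field_simp; ring
    refine ⟨1 - l, l, ?_, ?_, by ring, ?_⟩
    · have : l ≤ 1 := by rw [hl, div_le_one hne]; linarith
      linarith
    · rw [hl]; exact le_of_lt (div_pos (by linarith) hne)
    · ext
      · simp only [Prod.smul_def, smul_eq_mul, Prod.fst_add, Prod.mk_add_mk]
        linear_combination dv.1 * key
      · simp only [Prod.smul_def, smul_eq_mul, Prod.snd_add, Prod.mk_add_mk]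
        linear_combination dv.2 * key


-- L6: extension
lemma seg_sub_open {a b u : Pt} {c d : ℝ} (hc : 0 ≤ c) (hu : b - a = c • u) (hd : 0 < d) :
    segment ℝ a b ⊆ openSegment ℝ (a - d • u) (b + d • u) := by
  intro x hx
  obtain ⟨p, q, hp, hq, hpq, hx⟩ := hx
  have hb : b = a + c • u := by rw [← hu]; abel
  have hp' : p = 1 - q := by linarith
  have hq1 : q ≤ 1 := by linarith
  have hden : c + 2 * d > 0 := by linarith
  set s := (c + d - q * c) / (c + 2 * d) with hs
  have key : s * (c + 2 * d) = c + d - q * c := div_mul_cancel₀ _ (ne_of_gt hden)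
  refine ⟨s, 1 - s, ?_, ?_, by ring, ?_⟩
  · rw [hs]
    apply div_pos ?_ hden
    nlinarith
  · have : s < 1 := by
      rw [hs, div_lt_one hden]
      nlinarith
    linarith
  · rw [← hx, hb, hp']
    ext
    · simp only [Prod.smul_def, smul_eq_mul, Prod.fst_add, Prod.fst_sub, Prod.mk_add_mk,
        Prod.mk_sub_mk]
      linear_combination (- u.1) * key
    · simp only [Prod.smul_def, smul_eq_mul, Prod.snd_add, Prod.snd_sub, Prod.mk_add_mk,
        Prod.mk_sub_mk]
      linear_combination (- u.2) * key

-- L7: approximation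
lemma seg_near {a b a' b' : Pt} {r : ℝ} (ha : dist a' a ≤ r) (hb : dist b' b ≤ r) :
    ∀ x ∈ segment ℝ a' b', ∃ y ∈ segment ℝ a b, dist x y ≤ r := by
  rintro x ⟨p, q, hp, hq, hpq, hx⟩
  refine ⟨p • a + q • b, ⟨p, q, hp, hq, hpq, rfl⟩, ?_⟩
  rw [← hx, dist_eq_norm]
  have : p • a' + q • b' - (p • a + q • b) = p • (a' - a) + q • (b' - b) := by
    module
  rw [this]
  calc ‖p • (a' - a) + q • (b' - b)‖ ≤ ‖p • (a' - a)‖ + ‖q • (b' - b)‖ := norm_add_le _ _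
    _ = p * ‖a' - a‖ + q * ‖b' - b‖ := by
        rw [norm_smul, norm_smul, Real.norm_of_nonneg hp, Real.norm_of_nonneg hq]
    _ ≤ p * r + q * r := by
        have h1 : ‖a' - a‖ ≤ r := by rwa [← dist_eq_norm]
        have h2 : ‖b' - b‖ ≤ r := by rwa [← dist_eq_norm]
        have := mul_le_mul_of_nonneg_left h1 hp
        have := mul_le_mul_of_nonneg_left h2 hq
        linarith
    _ = r := by rw [← add_mul, hpq, one_mul]

lemma seg_sub_thickening {a b a' b' : Pt} {r : ℝ} (ha : dist a' a < r) (hb : dist b' b < r) :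
    segment ℝ a' b' ⊆ Metric.thickening r (segment ℝ a b) := by
  intro x hx
  obtain ⟨y, hy, hxy⟩ := seg_near (le_max_left (dist a' a) (dist b' b))
    (le_max_right (dist a' a) (dist b' b)) x hx
  rw [Metric.mem_thickening_iff]
  exact ⟨y, hy, lt_of_le_of_lt hxy (max_lt ha hb)⟩

lemma isCompact_seg (a b : Pt) : IsCompact (segment ℝ a b) := by
  rw [segment_eq_image]
  exact (isCompact_Icc).image (by continuity)


lemma affine_root {x y : ℝ} (h : x * y < 0) : ∃ t, 0 < t ∧ t < 1 ∧ (1 - t) * x + t * y = 0 := by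
  have hxy : x - y ≠ 0 := by
    intro h0
    have hxe : x = y := by linarith
    rw [hxe] at h
    nlinarith [mul_self_nonneg y]
  refine ⟨x / (x - y), ?_, ?_, ?_⟩
  · rcases mul_neg_iff.1 h with ⟨hx, hy⟩ | ⟨hx, hy⟩
    · exact div_pos hx (by linarith)
    · rw [div_pos_iff]; right; constructor <;> linarith
  · rcases mul_neg_iff.1 h with ⟨hx, hy⟩ | ⟨hx, hy⟩
    · rw [div_lt_one (by linarith)]; linarith
    · have hneg : x - y < 0 := by linarith
      rw [div_lt_one_iff]
      right; right; constructor <;> linarith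
  · field_simp; ring

lemma affine_root_unique {x y s : ℝ} (h : x * y < 0) (hs : (1 - s) * x + s * y = 0) :
    0 < s ∧ s < 1 := by
  constructor
  · rcases mul_neg_iff.1 h with ⟨hx, hy⟩ | ⟨hx, hy⟩ <;> nlinarith
  · rcases mul_neg_iff.1 h with ⟨hx, hy⟩ | ⟨hx, hy⟩ <;> nlinarith

-- L8 : strict crossing implies intersection
lemma cross_seg {A B C D : Pt}
    (h1 : cross (D - C) (A - C) * cross (D - C) (B - C) < 0)
    (h2 : cross (B - A) (C - A) * cross (B - A) (D - A) < 0) :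
    (segment ℝ A B ∩ segment ℝ C D).Nonempty := by
  have hDC : D - C ≠ 0 := by
    intro h0
    rw [h0] at h1
    simp [cross] at h1
  obtain ⟨t, ht0, ht1, hroot⟩ := affine_root h1
  set P := A + t • (B - A) with hP
  have hP1 : P ∈ segment ℝ A B := ⟨1 - t, t, by linarith, by linarith, by ring, by module⟩
  have hcross : cross (D - C) (P - C) = 0 := by
    have hPC : P - C = (A - C) + t • ((B - C) - (A - C)) := by rw [hP]; module
    rw [hPC, cross_add_right, cross_smul_right,
      cross_sub_right (D - C) (B - C) (A - C)]
    linarith [hroot]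
  obtain ⟨s, hPs⟩ := solve_param hDC hcross
  have hGs : (1 - s) * cross (B - A) (C - A) + s * cross (B - A) (D - A) = 0 := by
    have hPA : cross (B - A) (P - A) = 0 := by
      have hPA' : P - A = t • (B - A) := by rw [hP]; module
      rw [hPA', cross_smul_right, cross_self]; ring
    have hre : P - A = (C - A) + s • ((D - A) - (C - A)) := by
      have h4 : (D : Pt) - C = (D - A) - (C - A) := by module
      have h5 : P - A = (P - C) + (C - A) := by module
      rw [h5, hPs, h4]; module
    rw [hre, cross_add_right, cross_smul_right,
      cross_sub_right (B - A) (D - A) (C - A)] at hPA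
    linarith [hPA]
  obtain ⟨hs0, hs1⟩ := affine_root_unique h2 hGs
  have hP2 : P ∈ segment ℝ C D := by
    refine ⟨1 - s, s, by linarith, by linarith, by ring, ?_⟩
    have hPe : P = C + s • (D - C) := by
      have h5 : P = (P - C) + C := by module
      rw [h5, hPs]; module
    rw [hPe]; module
  exact ⟨P, hP1, hP2⟩

-- half of L9
lemma strict_half {au bu av bv p : Pt} (hv : bv ≠ av)
    (hns : ¬(cross (bu - au) (bv - av) = 0 ∧ cross (bu - au) (av - au) = 0))
    (hp1 : p ∈ openSegment ℝ au bu) (hp2 : p ∈ openSegment ℝ av bv) :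
    cross (bv - av) (au - av) * cross (bv - av) (bu - av) < 0 ∧
      cross (bu - au) (bv - av) ≠ 0 := by
  obtain ⟨p1, th, hp1', hth, hpq1, hx1⟩ := hp1
  obtain ⟨q1, sg, hq1', hsg, hpq2, hx2⟩ := hp2
  have hth1 : th < 1 := by linarith
  have hp1eq : p = au + th • (bu - au) := by
    rw [← hx1]
    have hh : p1 = 1 - th := by linarith
    rw [hh]; module
  have hp2eq : p = av + sg • (bv - av) := by
    rw [← hx2]
    have hh : q1 = 1 - sg := by linarith
    rw [hh]; module
  set du := bu - au with hdu
  set dv := bv - av with hdv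
  have hdvne : dv ≠ 0 := sub_ne_zero.2 hv
  have e0 : cross dv (p - av) = 0 := by
    have hh : p - av = sg • dv := by rw [hp2eq]; module
    rw [hh, cross_smul_right, cross_self]; ring
  have e1 : cross dv (au - av) + th * cross dv du = 0 := by
    have hh : p - av = (au - av) + th • du := by rw [hp1eq]; module
    rw [hh, cross_add_right, cross_smul_right] at e0
    linarith [e0]
  have hvdu : cross dv du ≠ 0 := by
    intro h0
    apply hns
    have hA : cross dv (au - av) = 0 := by rw [h0] at e1; linarith
    refine ⟨by rw [cross_skew, h0]; ring, ?_⟩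
    have h3 : cross (au - av) dv = 0 := by rw [cross_skew, hA]; ring
    have h4 : cross du dv = 0 := by rw [cross_skew, h0]; ring
    have h5 := parallel_trans hdvne h4 h3
    have h6 : (av : Pt) - au = -(au - av) := by module
    rw [h6, cross_neg_right, h5]; ring
  have e2 : cross dv (bu - av) = (1 - th) * cross dv du := by
    have hh : bu - av = (au - av) + du := by rw [hdu]; module
    rw [hh, cross_add_right]
    linarith [e1]
  have e3 : cross dv (au - av) = -th * cross dv du := by linarith [e1]
  constructor
  · rw [e2, e3]
    have hsq : 0 < cross dv du * cross dv du := mul_self_pos.2 hvdu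
    nlinarith [mul_pos hth (by linarith : (0:ℝ) < 1 - th)]
  · rw [cross_skew]
    simpa using hvdu

-- L9
lemma strict_of_open {au bu av bv p : Pt} (hu : bu ≠ au) (hv : bv ≠ av)
    (hns : ¬(cross (bu - au) (bv - av) = 0 ∧ cross (bu - au) (av - au) = 0))
    (hp1 : p ∈ openSegment ℝ au bu) (hp2 : p ∈ openSegment ℝ av bv) :
    cross (bv - av) (au - av) * cross (bv - av) (bu - av) < 0 ∧
      cross (bu - au) (av - au) * cross (bu - au) (bv - au) < 0 := by
  obtain ⟨c1, hc1⟩ := strict_half hv hns hp1 hp2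
  have hns' : ¬(cross (bv - av) (bu - au) = 0 ∧ cross (bv - av) (au - av) = 0) := by
    rintro ⟨hc, -⟩
    apply hc1
    rw [cross_skew, hc]; ring
  obtain ⟨c2, -⟩ := strict_half hu hns' hp2 hp1
  exact ⟨c1, c2⟩


lemma exists_good_rep {V : Type*} [Fintype V] (G : SimpleGraph V) (h : IsSegGraph G) :
    ∃ a b : V → Pt, (∀ v, a v ≠ b v) ∧ IsSegRep G (fun v => (a v, b v)) ∧
      ∀ u v : V, u ≠ v → G.Adj u v →
        (openSegment ℝ (a u) (b u) ∩ openSegment ℝ (a v) (b v)).Nonempty := by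
  obtain ⟨f, hf⟩ := h
  classical
  set dir : V → Pt := fun v => if (f v).1 = (f v).2 then ((1:ℝ), (0:ℝ)) else (f v).2 - (f v).1
    with hdirdef
  have hdir : ∀ v, dir v ≠ 0 := by
    intro v
    rw [hdirdef]
    dsimp only
    split_ifs with he
    · simp [Prod.ext_iff]
    · exact sub_ne_zero.2 (Ne.symm he)
  set co : V → ℝ := fun v => if (f v).1 = (f v).2 then (0:ℝ) else 1 with hcodef
  have hco : ∀ v, 0 ≤ co v := by
    intro v; rw [hcodef]; dsimp only; split_ifs <;> norm_num
  have hcu : ∀ v, (f v).2 - (f v).1 = co v • dir v := by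
    intro v
    rw [hcodef, hdirdef]
    dsimp only
    split_ifs with he
    · rw [he]; simp
    · simp
  set A : ℝ → V → Pt := fun δ v => (f v).1 - δ • dir v with hA
  set B : ℝ → V → Pt := fun δ v => (f v).2 + δ • dir v with hB
  have hsub : ∀ δ : ℝ, 0 < δ → ∀ v, segOf (f v) ⊆ openSegment ℝ (A δ v) (B δ v) := by
    intro δ hδ v
    exact seg_sub_open (hco v) (hcu v) hδ
  -- eventual disjointness for non-adjacent pairs
  have evdis : ∀ᶠ δ in nhdsWithin (0:ℝ) (Set.Ioi 0), ∀ u v : V, u ≠ v → ¬ G.Adj u v →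
      Disjoint (segment ℝ (A δ u) (B δ u)) (segment ℝ (A δ v) (B δ v)) := by
    rw [Filter.eventually_all]
    intro u
    rw [Filter.eventually_all]
    intro v
    by_cases huv : u ≠ v ∧ ¬ G.Adj u v
    · obtain ⟨hne, hnadj⟩ := huv
      have hdisj : Disjoint (segOf (f u)) (segOf (f v)) := by
        rw [Set.disjoint_iff_inter_eq_empty, ← Set.not_nonempty_iff_eq_empty]
        intro hne'
        exact hnadj ((hf u v hne).1 hne')
      obtain ⟨ρ, hρ, hthick⟩ := hdisj.exists_thickenings (isCompact_seg _ _)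
        (isCompact_seg _ _).isClosed
      set M := max ‖dir u‖ ‖dir v‖ + 1 with hM
      have hMpos : 0 < M := by positivity
      have hmem : Set.Ioo (0:ℝ) (ρ / M) ∈ nhdsWithin (0:ℝ) (Set.Ioi 0) :=
        Ioo_mem_nhdsGT_of_mem ⟨le_refl _, div_pos hρ hMpos⟩
      filter_upwards [hmem] with δ hδ
      intro _ _
      obtain ⟨hδ0, hδρ⟩ := hδ
      have key : ∀ w : V, ‖dir w‖ ≤ max ‖dir u‖ ‖dir v‖ →
          segment ℝ (A δ w) (B δ w) ⊆ Metric.thickening ρ (segOf (f w)) := by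
        intro w hw
        have hd1 : dist (A δ w) ((f w).1) = δ * ‖dir w‖ := by
          rw [hA]
          dsimp only
          rw [dist_eq_norm]
          have : (f w).1 - δ • dir w - (f w).1 = -(δ • dir w) := by module
          rw [this, norm_neg, norm_smul, Real.norm_of_nonneg (le_of_lt hδ0)]
        have hd2 : dist (B δ w) ((f w).2) = δ * ‖dir w‖ := by
          rw [hB]
          dsimp only
          rw [dist_eq_norm]
          have : (f w).2 + δ • dir w - (f w).2 = δ • dir w := by module
          rw [this, norm_smul, Real.norm_of_nonneg (le_of_lt hδ0)]
        have hlt : δ * ‖dir w‖ < ρ := by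
          have h1 : δ * ‖dir w‖ ≤ δ * M := by
            apply mul_le_mul_of_nonneg_left _ (le_of_lt hδ0)
            rw [hM]; linarith
          have h2 : δ * M < ρ := (lt_div_iff₀ hMpos).1 hδρ
          linarith
        exact seg_sub_thickening (by rw [hd1]; exact hlt) (by rw [hd2]; exact hlt)
      exact Set.disjoint_of_subset (key u (le_max_left _ _)) (key v (le_max_right _ _)) hthick
    · filter_upwards with δ
      intro h1 h2
      tauto
  obtain ⟨δ, hdis, hδ0⟩ := (evdis.and eventually_mem_nhdsWithin).exists
  rw [Set.mem_Ioi] at hδ0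
  refine ⟨A δ, B δ, ?_, ?_, ?_⟩
  · intro v heq
    apply hdir v
    have hBA : B δ v - A δ v = (co v + 2 * δ) • dir v := by
      rw [hA, hB]
      dsimp only
      rw [add_smul, ← hcu v]
      module
    rw [← heq] at hBA
    have h0 : (co v + 2 * δ) • dir v = 0 := by rw [← hBA]; simp
    rcases smul_eq_zero.1 h0 with hc0 | hd0
    · exfalso; have := hco v; linarith [hc0]
    · exact hd0
  · intro u v hne
    constructor
    · intro hne2
      by_contra hnadj
      rw [Set.nonempty_iff_ne_empty] at hne2
      apply hne2
      rw [← Set.disjoint_iff_inter_eq_empty]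
      exact hdis u v hne hnadj
    · intro hadj
      obtain ⟨p, hp1, hp2⟩ := (hf u v hne).2 hadj
      exact ⟨p, openSegment_subset_segment ℝ _ _ (hsub δ hδ0 u hp1),
        openSegment_subset_segment ℝ _ _ (hsub δ hδ0 v hp2)⟩
  · intro u v hne hadj
    obtain ⟨p, hp1, hp2⟩ := (hf u v hne).2 hadj
    exact ⟨p, hsub δ hδ0 u hp1, hsub δ hδ0 v hp2⟩


section Perturb

variable {V : Type*} [Fintype V] (G : SimpleGraph V)

-- the sameline relation w.r.t. endpoint maps a b
def SL (a b : V → Pt) (u v : V) : Prop :=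
  cross (b u - a u) (b v - a v) = 0 ∧ cross (b u - a u) (a v - a u) = 0

lemma SL_refl (a b : V → Pt) (v : V) : SL a b v v :=
  ⟨cross_self _, by rw [sub_self, cross_zero_right]⟩

lemma SL_symm {a b : V → Pt} (hnd : ∀ v, a v ≠ b v) {u v : V} (h : SL a b u v) :
    SL a b v u := by
  obtain ⟨h1, h2⟩ := h
  have hdu : b u - a u ≠ 0 := sub_ne_zero.2 (Ne.symm (hnd u))
  have hvu : cross (b v - a v) (b u - a u) = 0 := by rw [cross_skew, h1]; ring
  refine ⟨hvu, ?_⟩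
  have h3 : cross (b v - a v) (b u - a u) = 0 := hvu
  have h4 : cross (a v - a u) (b u - a u) = 0 := by rw [cross_skew, h2]; ring
  have h5 := parallel_trans hdu h3 h4
  have h6 : (a u : Pt) - a v = -(a v - a u) := by module
  rw [h6, cross_neg_right, h5]; ring

lemma SL_trans {a b : V → Pt} (hnd : ∀ v, a v ≠ b v) {u v w : V}
    (h : SL a b u v) (h' : SL a b v w) : SL a b u w := by
  obtain ⟨h1, h2⟩ := h
  obtain ⟨h1', h2'⟩ := h'
  have hdv : b v - a v ≠ 0 := sub_ne_zero.2 (Ne.symm (hnd v))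
  have hwv : cross (b w - a w) (b v - a v) = 0 := by rw [cross_skew, h1']; ring
  have hc1 : cross (b u - a u) (b w - a w) = 0 := parallel_trans hdv h1 hwv
  refine ⟨hc1, ?_⟩
  have h4 : cross (a w - a v) (b v - a v) = 0 := by rw [cross_skew, h2']; ring
  have h5 : cross (b u - a u) (a w - a v) = 0 := parallel_trans hdv h1 h4
  have h6 : (a w : Pt) - a u = (a w - a v) + (a v - a u) := by module
  rw [h6, cross_add_right, h5, h2]; ring

lemma min_perturb {x y x' y' s d : ℝ} (hx : |x' - x| < d) (hy : |y' - y| < d)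
    (h : min x y < s - d) : min x' y' < s := by
  rcases le_total x y with hle | hle
  · rw [min_eq_left hle] at h
    have : x' < x + d := by cases abs_lt.1 hx; linarith
    calc min x' y' ≤ x' := min_le_left _ _
    _ < s := by linarith
  · rw [min_eq_right hle] at h
    have : y' < y + d := by cases abs_lt.1 hy; linarith
    calc min x' y' ≤ y' := min_le_right _ _
    _ < s := by linarith

lemma max_perturb {x y x' y' s d : ℝ} (hx : |x' - x| < d) (hy : |y' - y| < d)
    (h : s + d < max x y) : s < max x' y' := by
  rcases le_total x y with hle | hle
  · rw [max_eq_right hle] at h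
    have : y < y' + d := by cases abs_lt.1 hy; linarith
    calc s < y' := by linarith
    _ ≤ max x' y' := le_max_right _ _
  · rw [max_eq_left hle] at h
    have : x < x' + d := by cases abs_lt.1 hx; linarith
    calc s < x' := by linarith
    _ ≤ max x' y' := le_max_left _ _

lemma endpoint_bound {o d oh dh : Pt} {t th e : ℝ} (he1 : e ≤ 1)
    (h1 : dist oh o < e) (h2 : dist dh d < e) (h3 : |th - t| < e) :
    dist (oh + th • dh) (o + t • d) < e * (2 + |t| + ‖d‖) := by
  have he0 : 0 < e := lt_of_le_of_lt dist_nonneg h1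
  have key : oh + th • dh - (o + t • d) = (oh - o) + (th • (dh - d) + (th - t) • d) := by
    module
  rw [dist_eq_norm, key]
  have n1 : ‖oh - o‖ < e := by rw [← dist_eq_norm]; exact h1
  have n2 : ‖th • (dh - d)‖ ≤ (|t| + 1) * e := by
    rw [norm_smul, Real.norm_eq_abs]
    have ht : |th| ≤ |t| + 1 := by
      have := abs_sub_abs_le_abs_sub th t
      linarith [le_of_lt h3]
    have hd : ‖dh - d‖ ≤ e := by rw [← dist_eq_norm]; exact le_of_lt h2
    exact mul_le_mul ht hd (norm_nonneg _) (by positivity)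
  have n3 : ‖(th - t) • d‖ ≤ e * ‖d‖ := by
    rw [norm_smul, Real.norm_eq_abs]
    exact mul_le_mul (le_of_lt h3) (le_refl _) (norm_nonneg _) (le_of_lt he0)
  calc ‖(oh - o) + (th • (dh - d) + (th - t) • d)‖
      ≤ ‖oh - o‖ + ‖th • (dh - d) + (th - t) • d‖ := norm_add_le _ _
    _ ≤ ‖oh - o‖ + (‖th • (dh - d)‖ + ‖(th - t) • d‖) := by
        linarith [norm_add_le (th • (dh - d)) ((th - t) • d)]
    _ < e + ((|t| + 1) * e + e * ‖d‖) := by linarith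
    _ = e * (2 + |t| + ‖d‖) := by ring

lemma param_between {t1 t2 th : ℝ} (h : t1 ≠ t2) (h0 : 0 < th) (h1 : th < 1) :
    min t1 t2 < (1-th)*t1 + th*t2 ∧ (1-th)*t1 + th*t2 < max t1 t2 := by
  rcases lt_or_gt_of_ne h with hlt | hlt
  · rw [min_eq_left hlt.le, max_eq_right hlt.le]
    constructor <;> nlinarith
  · rw [min_eq_right hlt.le, max_eq_left hlt.le]
    constructor <;> nlinarith

lemma open_param {o dv p : Pt} {t1 t2 : ℝ}
    (hp : p ∈ openSegment ℝ (o + t1 • dv) (o + t2 • dv)) :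
    ∃ th : ℝ, 0 < th ∧ th < 1 ∧ p = o + ((1-th)*t1 + th*t2) • dv := by
  obtain ⟨x, y, hx, hy, hxy, he⟩ := hp
  refine ⟨y, hy, by linarith, ?_⟩
  rw [← he]
  have hx' : x = 1 - y := by linarith
  rw [hx']
  module

def ratPts (g : (ℚ × ℚ) × (ℚ × ℚ)) : Pt × Pt :=
  (((g.1.1 : ℝ), (g.1.2 : ℝ)), ((g.2.1 : ℝ), (g.2.2 : ℝ)))

theorem exists_rat_rep {V : Type*} [Fintype V] (G : SimpleGraph V)
    (a b : V → Pt) (hnd : ∀ v, a v ≠ b v) (hrep : IsSegRep G (fun v => (a v, b v)))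
    (hop : ∀ u v : V, u ≠ v → G.Adj u v →
      (openSegment ℝ (a u) (b u) ∩ openSegment ℝ (a v) (b v)).Nonempty) :
    ∃ g : V → (ℚ × ℚ) × (ℚ × ℚ), IsSegRep G (fun v => ratPts (g v)) := by
  classical
  letI S : Setoid V := ⟨SL a b,
    ⟨SL_refl a b, fun h => SL_symm hnd h, fun h h' => SL_trans hnd h h'⟩⟩
  have hSL : ∀ u v : V, (u ≈ v) = SL a b u v := fun u v => rfl
  set rep : V → V := fun v => (Quotient.mk S v).out with hrepdef
  have hrepSL : ∀ v, SL a b (rep v) v := fun v => Quotient.mk_out v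
  have hconst : ∀ u v, SL a b u v → rep u = rep v := by
    intro u v h
    rw [hrepdef]
    dsimp only
    rw [Quotient.sound h]
  set o : V → Pt := fun v => a (rep v) with hodef
  set d : V → Pt := fun v => b (rep v) - a (rep v) with hddef
  have hd0 : ∀ v, d v ≠ 0 := fun v => sub_ne_zero.2 (Ne.symm (hnd (rep v)))
  have hpa : ∀ v, ∃ t : ℝ, a v - o v = t • d v := by
    intro v
    exact solve_param (hd0 v) (hrepSL v).2
  have hpb : ∀ v, ∃ t : ℝ, b v - o v = t • d v := by
    intro v
    have h1 : cross (d v) (b v - o v) = 0 := by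
      have he : b v - o v = (b v - a v) + (a v - o v) := by module
      rw [he, cross_add_right, (hrepSL v).1, (hrepSL v).2]; ring
    exact solve_param (hd0 v) h1
  choose t1 ht1 using hpa
  choose t2 ht2 using hpb
  have ha' : ∀ v, a v = o v + t1 v • d v := by
    intro v; have := ht1 v; rw [← this]; module
  have hb' : ∀ v, b v = o v + t2 v • d v := by
    intro v; have := ht2 v; rw [← this]; module
  have ht12 : ∀ v, t1 v ≠ t2 v := by
    intro v he
    apply hnd v
    rw [ha', hb', he]
  set K : V → ℝ := fun v => 2 + |t1 v| + |t2 v| + ‖d v‖ with hKdef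
  have hK2 : ∀ v, 2 ≤ K v := by
    intro v; rw [hKdef]; dsimp only
    have := abs_nonneg (t1 v); have := abs_nonneg (t2 v); have := norm_nonneg (d v)
    linarith
  -- the shared parameter of a sameline adjacent intersection point
  have sparam : ∀ u v : V, u ≠ v → G.Adj u v → SL a b u v → ∃ s : ℝ,
      (min (t1 u) (t2 u) < s ∧ s < max (t1 u) (t2 u)) ∧
      (min (t1 v) (t2 v) < s ∧ s < max (t1 v) (t2 v)) := by
    intro u v hne hadj hsl
    obtain ⟨p, hp1, hp2⟩ := hop u v hne hadj
    rw [ha' u, hb' u] at hp1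
    rw [ha' v, hb' v] at hp2
    obtain ⟨th, hth0, hth1, hpe1⟩ := open_param hp1
    obtain ⟨sg, hsg0, hsg1, hpe2⟩ := open_param hp2
    have hou : o u = o v := by
      rw [hodef]; dsimp only; rw [hconst u v hsl]
    have hdu : d u = d v := by
      rw [hddef]; dsimp only; rw [hconst u v hsl]
    set su := (1-th)*t1 u + th*t2 u with hsu
    set sv := (1-sg)*t1 v + sg*t2 v with hsv
    have hsusv : su = sv := by
      have he : o u + su • d u = o u + sv • d u := by
        rw [← hpe1, hpe2, hou, hdu]
      have he2 : (su - sv) • d u = 0 := by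
        have := sub_eq_zero.2 he
        rw [sub_smul]
        have h3 : o u + su • d u - (o u + sv • d u) = su • d u - sv • d u := by module
        rw [← h3, this]
      rcases smul_eq_zero.1 he2 with h4 | h4
      · linarith [sub_eq_zero.1 h4]
      · exact absurd h4 (hd0 u)
    refine ⟨su, param_between (ht12 u) hth0 hth1, ?_⟩
    rw [hsusv]
    exact param_between (ht12 v) hsg0 hsg1
  -- per-pair eventual conditions
  have main : ∀ u v : V, ∀ᶠ ε in nhdsWithin (0:ℝ) (Set.Ioi 0),
      (0 < ε ∧ ε ≤ 1) → u ≠ v → ∀ (oh dh : V → Pt) (s1 s2 : V → ℝ),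
      (∀ x y : V, SL a b x y → oh x = oh y ∧ dh x = dh y) →
      (∀ w, dist (oh w) (o w) < ε ∧ dist (dh w) (d w) < ε ∧
        |s1 w - t1 w| < ε ∧ |s2 w - t2 w| < ε) →
      ((G.Adj u v → ((segment ℝ (oh u + s1 u • dh u) (oh u + s2 u • dh u)) ∩
          (segment ℝ (oh v + s1 v • dh v) (oh v + s2 v • dh v))).Nonempty) ∧
       (¬ G.Adj u v → Disjoint (segment ℝ (oh u + s1 u • dh u) (oh u + s2 u • dh u))
          (segment ℝ (oh v + s1 v • dh v) (oh v + s2 v • dh v)))) := by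
    intro u v
    by_cases hne : u = v
    · filter_upwards with ε _ hne'
      exact absurd hne hne'
    by_cases hadj : G.Adj u v
    · by_cases hsl : SL a b u v
      · -- same line case
        obtain ⟨s, ⟨hu1, hu2⟩, hv1, hv2⟩ := sparam u v hne hadj hsl
        set m := min (min (s - min (t1 u) (t2 u)) (max (t1 u) (t2 u) - s))
                  (min (s - min (t1 v) (t2 v)) (max (t1 v) (t2 v) - s)) with hm
        have hm0 : 0 < m := by
          rw [hm]
          exact lt_min (lt_min (by linarith) (by linarith))
            (lt_min (by linarith) (by linarith))
        filter_upwards [Ioo_mem_nhdsGT_of_mem ⟨le_refl (0:ℝ), hm0⟩] with ε hεI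
        intro _ _ oh dh s1 s2 hcons hclose
        obtain ⟨hεa, hεb⟩ := hεI
        have hmu1 : m ≤ s - min (t1 u) (t2 u) := le_trans (min_le_left _ _) (min_le_left _ _)
        have hmu2 : m ≤ max (t1 u) (t2 u) - s := le_trans (min_le_left _ _) (min_le_right _ _)
        have hmv1 : m ≤ s - min (t1 v) (t2 v) := le_trans (min_le_right _ _) (min_le_left _ _)
        have hmv2 : m ≤ max (t1 v) (t2 v) - s := le_trans (min_le_right _ _) (min_le_right _ _)
        have hoe := hcons u v hsl
        constructor
        · intro _
          refine ⟨oh u + s • dh u, ?_, ?_⟩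
          · exact mem_seg_param
              (min_perturb (hclose u).2.2.1 (hclose u).2.2.2 (by linarith))
              (max_perturb (hclose u).2.2.1 (hclose u).2.2.2 (by linarith))
          · rw [hoe.1, hoe.2]
            exact mem_seg_param
              (min_perturb (hclose v).2.2.1 (hclose v).2.2.2 (by linarith))
              (max_perturb (hclose v).2.2.1 (hclose v).2.2.2 (by linarith))
        · intro hna
          exact absurd hadj hna
      · -- crossing case
        obtain ⟨p, hp1, hp2⟩ := hop u v hne hadj
        obtain ⟨hc1, hc2⟩ := strict_of_open (Ne.symm (hnd u)) (Ne.symm (hnd v)) hsl hp1 hp2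
        set F : Pt × Pt × Pt × Pt → ℝ × ℝ := fun x =>
          (cross (x.2.2.2 - x.2.2.1) (x.1 - x.2.2.1) * cross (x.2.2.2 - x.2.2.1) (x.2.1 - x.2.2.1),
           cross (x.2.1 - x.1) (x.2.2.1 - x.1) * cross (x.2.1 - x.1) (x.2.2.2 - x.1)) with hF
        have hFc : Continuous F := by
          rw [hF]; unfold cross; fun_prop
        have hU : IsOpen (F ⁻¹' (Set.Iio (0:ℝ) ×ˢ Set.Iio (0:ℝ))) :=
          (IsOpen.prod isOpen_Iio isOpen_Iio).preimage hFc
        have hx0 : ((a u, b u, a v, b v) : Pt × Pt × Pt × Pt) ∈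
            F ⁻¹' (Set.Iio (0:ℝ) ×ˢ Set.Iio (0:ℝ)) := by
          rw [Set.mem_preimage, hF, Set.mem_prod]
          exact ⟨hc1, hc2⟩
        obtain ⟨ρ, hρ0, hball⟩ := Metric.isOpen_iff.1 hU _ hx0
        have hKK : (0:ℝ) < K u + K v := by linarith [hK2 u, hK2 v]
        have hε₀0 : 0 < min 1 (ρ / (K u + K v)) := lt_min one_pos (div_pos hρ0 hKK)
        filter_upwards [Ioo_mem_nhdsGT_of_mem ⟨le_refl (0:ℝ), hε₀0⟩] with ε hεI
        intro _ _ oh dh s1 s2 hcons hclose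
        obtain ⟨hεa, hεb⟩ := hεI
        have hεle1 : ε ≤ 1 := le_of_lt (lt_of_lt_of_le hεb (min_le_left _ _))
        have hKsum : ε * (K u + K v) < ρ := by
          have h5 := lt_of_lt_of_le hεb (min_le_right _ _)
          exact (lt_div_iff₀ hKK).1 h5
        have hend : ∀ w : V, dist (oh w + s1 w • dh w) (a w) < ε * K w ∧
            dist (oh w + s2 w • dh w) (b w) < ε * K w := by
          intro w
          constructor
          · rw [ha' w]
            refine lt_of_lt_of_le (endpoint_bound hεle1 (hclose w).1 (hclose w).2.1
              (hclose w).2.2.1) ?_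
            apply mul_le_mul_of_nonneg_left _ hεa.le
            rw [hKdef]; dsimp only
            linarith [abs_nonneg (t2 w)]
          · rw [hb' w]
            refine lt_of_lt_of_le (endpoint_bound hεle1 (hclose w).1 (hclose w).2.1
              (hclose w).2.2.2) ?_
            apply mul_le_mul_of_nonneg_left _ hεa.le
            rw [hKdef]; dsimp only
            linarith [abs_nonneg (t1 w)]
        have hKle : ∀ w : V, w = u ∨ w = v → ε * K w < ρ := by
          rintro w (rfl | rfl)
          · have : ε * K w ≤ ε * (K w + K v) := by nlinarith [hK2 v]
            linarith
          · have : ε * K w ≤ ε * (K u + K w) := by nlinarith [hK2 u]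
            linarith
        have hmem : ((oh u + s1 u • dh u, oh u + s2 u • dh u, oh v + s1 v • dh v,
            oh v + s2 v • dh v) : Pt × Pt × Pt × Pt) ∈
            Metric.ball ((a u, b u, a v, b v) : Pt × Pt × Pt × Pt) ρ := by
          rw [Metric.mem_ball, Prod.dist_eq]
          apply max_lt
          · exact lt_trans (hend u).1 (hKle u (Or.inl rfl))
          · rw [Prod.dist_eq]
            apply max_lt
            · exact lt_trans (hend u).2 (hKle u (Or.inl rfl))
            · rw [Prod.dist_eq]
              apply max_lt
              · exact lt_trans (hend v).1 (hKle v (Or.inr rfl))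
              · exact lt_trans (hend v).2 (hKle v (Or.inr rfl))
        have hin := hball hmem
        rw [Set.mem_preimage, hF, Set.mem_prod] at hin
        constructor
        · intro _
          exact cross_seg hin.1 hin.2
        · intro hna
          exact absurd hadj hna
    · -- non-adjacent case
      have hdisj : Disjoint (segment ℝ (a u) (b u)) (segment ℝ (a v) (b v)) := by
        rw [Set.disjoint_iff_inter_eq_empty, ← Set.not_nonempty_iff_eq_empty]
        intro hne2
        exact hadj ((hrep u v hne).1 hne2)
      obtain ⟨ρ, hρ0, hthick⟩ := hdisj.exists_thickenings (isCompact_seg _ _)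
        (isCompact_seg _ _).isClosed
      have hKK : (0:ℝ) < K u + K v := by linarith [hK2 u, hK2 v]
      have hε₀0 : 0 < min 1 (ρ / (K u + K v)) := lt_min one_pos (div_pos hρ0 hKK)
      filter_upwards [Ioo_mem_nhdsGT_of_mem ⟨le_refl (0:ℝ), hε₀0⟩] with ε hεI
      intro _ _ oh dh s1 s2 hcons hclose
      obtain ⟨hεa, hεb⟩ := hεI
      have hεle1 : ε ≤ 1 := le_of_lt (lt_of_lt_of_le hεb (min_le_left _ _))
      have hKsum : ε * (K u + K v) < ρ := by
        have h5 := lt_of_lt_of_le hεb (min_le_right _ _)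
        exact (lt_div_iff₀ hKK).1 h5
      have hend : ∀ w : V, dist (oh w + s1 w • dh w) (a w) < ε * K w ∧
          dist (oh w + s2 w • dh w) (b w) < ε * K w := by
        intro w
        constructor
        · rw [ha' w]
          refine lt_of_lt_of_le (endpoint_bound hεle1 (hclose w).1 (hclose w).2.1
            (hclose w).2.2.1) ?_
          apply mul_le_mul_of_nonneg_left _ hεa.le
          rw [hKdef]; dsimp only
          linarith [abs_nonneg (t2 w)]
        · rw [hb' w]
          refine lt_of_lt_of_le (endpoint_bound hεle1 (hclose w).1 (hclose w).2.1
            (hclose w).2.2.2) ?_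
          apply mul_le_mul_of_nonneg_left _ hεa.le
          rw [hKdef]; dsimp only
          linarith [abs_nonneg (t1 w)]
      have hKle : ∀ w : V, w = u ∨ w = v → ε * K w < ρ := by
        rintro w (rfl | rfl)
        · have : ε * K w ≤ ε * (K w + K v) := by nlinarith [hK2 v]
          linarith
        · have : ε * K w ≤ ε * (K u + K w) := by nlinarith [hK2 u]
          linarith
      constructor
      · intro hA
        exact absurd hA hadj
      · intro _
        refine Set.disjoint_of_subset ?_ ?_ hthick
        · exact seg_sub_thickening (lt_trans (hend u).1 (hKle u (Or.inl rfl)))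
            (lt_trans (hend u).2 (hKle u (Or.inl rfl)))
        · exact seg_sub_thickening (lt_trans (hend v).1 (hKle v (Or.inr rfl)))
            (lt_trans (hend v).2 (hKle v (Or.inr rfl)))
  -- combine
  replace main := Filter.eventually_all.2 (fun u => Filter.eventually_all.2 (main u))
  have hIoc : ∀ᶠ ε in nhdsWithin (0:ℝ) (Set.Ioi 0), 0 < ε ∧ ε ≤ 1 := by
    have : Set.Ioc (0:ℝ) 1 ∈ nhdsWithin (0:ℝ) (Set.Ioi 0) :=
      Ioc_mem_nhdsGT_of_mem ⟨le_refl _, zero_lt_one⟩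
    filter_upwards [this] with ε hε
    exact ⟨hε.1, hε.2⟩
  obtain ⟨ε, hmain, hε⟩ := (main.and hIoc).exists
  obtain ⟨hε0, hε1⟩ := hε
  -- rational approximations
  set rt : ℝ → ℚ := fun x => Classical.choose (exists_rat_near x hε0) with hrtdef
  have hrt : ∀ x : ℝ, |x - (rt x : ℝ)| < ε := fun x => Classical.choose_spec (exists_rat_near x hε0)
  set oh : V → Pt := fun v => ((rt (o v).1 : ℝ), (rt (o v).2 : ℝ)) with hohdef
  set dh : V → Pt := fun v => ((rt (d v).1 : ℝ), (rt (d v).2 : ℝ)) with hdhdef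
  set s1 : V → ℝ := fun v => (rt (t1 v) : ℝ) with hs1def
  set s2 : V → ℝ := fun v => (rt (t2 v) : ℝ) with hs2def
  have hdist2 : ∀ p : Pt, dist (((rt p.1 : ℝ), (rt p.2 : ℝ)) : Pt) p < ε := by
    intro p
    rw [Prod.dist_eq]
    apply max_lt <;> rw [Real.dist_eq, abs_sub_comm] <;> exact hrt _
  have hcons : ∀ x y : V, SL a b x y → oh x = oh y ∧ dh x = dh y := by
    intro x y h
    have hxy := hconst x y h
    rw [hohdef, hdhdef, hodef, hddef]
    dsimp only
    rw [hxy]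
    exact ⟨rfl, rfl⟩
  have hclose : ∀ w, dist (oh w) (o w) < ε ∧ dist (dh w) (d w) < ε ∧
      |s1 w - t1 w| < ε ∧ |s2 w - t2 w| < ε := by
    intro w
    refine ⟨hdist2 _, hdist2 _, ?_, ?_⟩
    · rw [hs1def]; dsimp only; rw [abs_sub_comm]; exact hrt _
    · rw [hs2def]; dsimp only; rw [abs_sub_comm]; exact hrt _
  have hfin := fun (u : V) (v : V) (hne : u ≠ v) =>
    hmain u v ⟨hε0, hε1⟩ hne oh dh s1 s2 hcons hclose
  refine ⟨fun v => ((rt (o v).1 + rt (t1 v) * rt (d v).1, rt (o v).2 + rt (t1 v) * rt (d v).2),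
    (rt (o v).1 + rt (t2 v) * rt (d v).1, rt (o v).2 + rt (t2 v) * rt (d v).2)), ?_⟩
  have heq : (fun v => ratPts ((rt (o v).1 + rt (t1 v) * rt (d v).1,
        rt (o v).2 + rt (t1 v) * rt (d v).2),
      (rt (o v).1 + rt (t2 v) * rt (d v).1, rt (o v).2 + rt (t2 v) * rt (d v).2)))
      = fun v => (oh v + s1 v • dh v, oh v + s2 v • dh v) := by
    funext v
    rw [ratPts, hohdef, hdhdef, hs1def, hs2def]
    dsimp only
    ext <;> push_cast <;> simp [Prod.smul_def] <;> ring
  rw [heq]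
  intro u v hne
  constructor
  · intro hne2
    by_contra hnadj
    rw [Set.nonempty_iff_ne_empty] at hne2
    apply hne2
    rw [← Set.disjoint_iff_inter_eq_empty]
    exact (hfin u v hne).2 hnadj
  · exact (hfin u v hne).1

end Perturb

lemma smul_seg_image (c : ℝ) (A B : Pt) :
    (fun x : Pt => c • x) '' segment ℝ A B = segment ℝ (c • A) (c • B) := by
  have h := image_segment ℝ ((c • LinearMap.id : Pt →ₗ[ℝ] Pt).toAffineMap) A B
  simpa using h

lemma smul_inter_nonempty {c : ℝ} (hc : c ≠ 0) (A B C D : Pt) :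
    ((segment ℝ (c • A) (c • B)) ∩ (segment ℝ (c • C) (c • D))).Nonempty ↔
      ((segment ℝ A B) ∩ (segment ℝ C D)).Nonempty := by
  have hinj : Function.Injective (fun x : Pt => c • x) := smul_right_injective Pt hc
  rw [← smul_seg_image c A B, ← smul_seg_image c C D, ← Set.image_inter hinj,
    Set.image_nonempty]

lemma int_scale (r : ℚ) (N : ℕ) (hd : r.den ∣ N) :
    ((r.num * ((N / r.den : ℕ) : ℤ) : ℤ) : ℝ) = (N : ℝ) * (r : ℝ) := by
  have hden : ((r.den : ℝ)) ≠ 0 := by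
    exact_mod_cast r.den_nz
  have h1 : ((N / r.den : ℕ) : ℝ) = (N : ℝ) / (r.den : ℝ) := Nat.cast_div hd hden
  rw [Int.cast_mul, Int.cast_natCast, h1, Rat.cast_def]
  field_simp


end SegAux
end

theorem stmt9 {V : Type*} [Fintype V] (G : SimpleGraph V) (h : IsSegGraph G) :
    ∃ g : V → (ℤ × ℤ) × (ℤ × ℤ), IsSegRep G (fun v => intPts (g v)) := by
  open SegAux in

  classical
  obtain ⟨a, b, hnd, hrep, hop⟩ := exists_good_rep G h
  obtain ⟨q, hq⟩ := exists_rat_rep G a b hnd hrep hop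
  set D : V → ℕ := fun v => (q v).1.1.den * (q v).1.2.den * (q v).2.1.den * (q v).2.2.den
    with hD
  set N : ℕ := ∏ v, D v with hN
  have hDpos : ∀ v, 0 < D v := by
    intro v
    rw [hD]
    dsimp only
    exact mul_pos (mul_pos (mul_pos (q v).1.1.pos (q v).1.2.pos) (q v).2.1.pos) (q v).2.2.pos
  have hNpos : 0 < N := Finset.prod_pos (fun v _ => hDpos v)
  have hdvd : ∀ v, D v ∣ N := fun v => Finset.dvd_prod_of_mem D (Finset.mem_univ v)
  have h11 : ∀ v, (q v).1.1.den ∣ N := by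
    intro v
    refine dvd_trans ?_ (hdvd v)
    rw [hD]; dsimp only
    exact dvd_mul_of_dvd_left (dvd_mul_of_dvd_left (dvd_mul_right _ _) _) _
  have h12 : ∀ v, (q v).1.2.den ∣ N := by
    intro v
    refine dvd_trans ?_ (hdvd v)
    rw [hD]; dsimp only
    exact dvd_mul_of_dvd_left (dvd_mul_of_dvd_left (dvd_mul_left _ _) _) _
  have h21 : ∀ v, (q v).2.1.den ∣ N := by
    intro v
    refine dvd_trans ?_ (hdvd v)
    rw [hD]; dsimp only
    exact dvd_mul_of_dvd_left (dvd_mul_left _ _) _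
  have h22 : ∀ v, (q v).2.2.den ∣ N := by
    intro v
    refine dvd_trans ?_ (hdvd v)
    rw [hD]; dsimp only
    exact dvd_mul_left _ _
  set iz : ℚ → ℤ := fun r => r.num * ((N / r.den : ℕ) : ℤ) with hiz
  set gInt : V → (ℤ × ℤ) × (ℤ × ℤ) := fun v =>
    ((iz (q v).1.1, iz (q v).1.2), (iz (q v).2.1, iz (q v).2.2)) with hgInt
  have hcast : ∀ v, intPts (gInt v) =
      ((N : ℝ) • (ratPts (q v)).1, (N : ℝ) • (ratPts (q v)).2) := by
    intro v
    rw [hgInt, hiz]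
    dsimp only [intPts, ratPts]
    have e11 := int_scale (q v).1.1 N (h11 v)
    have e12 := int_scale (q v).1.2 N (h12 v)
    have e21 := int_scale (q v).2.1 N (h21 v)
    have e22 := int_scale (q v).2.2 N (h22 v)
    simp only [Prod.smul_def, smul_eq_mul]
    exact Prod.ext (Prod.ext e11 e12) (Prod.ext e21 e22)
  have hNne : (N : ℝ) ≠ 0 := Nat.cast_ne_zero.2 hNpos.ne'
  refine ⟨gInt, ?_⟩
  intro u v huv
  rw [← hq u v huv]
  have seq : ∀ w, segOf (intPts (gInt w)) =
      segment ℝ ((N : ℝ) • (ratPts (q w)).1) ((N : ℝ) • (ratPts (q w)).2) := by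
    intro w
    rw [segOf, hcast w]
  show (segOf (intPts (gInt u)) ∩ segOf (intPts (gInt v))).Nonempty ↔ _
  rw [seq u, seq v]
  exact smul_inter_nonempty hNne _ _ _ _
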